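/- Let G = (V, E) be a connected simple graph whose vertex degrees are all at most D for some finite D, and let o ∈ V. If G has subexponential growth from o, i.e., liminf_{n→∞} |B(o,n)|^{1/n} = 1, then liminf_{n→∞} |{{x,y} ∈ E : d(o,x) = n and d(o,y) = n+1}| / |B(o,n)| = 0. (This is the claim in the paper that condition (1.5) is weaker than subexponential growth (1.4).) -/

import Mathlib

open Filter

lemma aux_ball_finite {V : Type*} (G : SimpleGraph V) (hconn : G.Connected)
    (hdeg : ∀ v : V, (G.neighborSet v).Finite) (o : V) :
    ∀ n : ℕ, {x : V | G.dist o x ≤ n}.Finite := by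
  intro n
  induction n with
  | zero =>
    refine (Set.finite_singleton o).subset ?_
    intro x hx
    simp only [Set.mem_setOf_eq, Nat.le_zero] at hx
    simpa using (hconn.dist_eq_zero_iff.mp hx).symm
  | succ n ih =>
    refine (ih.union (ih.biUnion fun y _ => hdeg y)).subset ?_
    intro x hx
    simp only [Set.mem_setOf_eq] at hx
    rcases Nat.lt_or_ge (G.dist o x) (n+1) with h | h
    · exact Or.inl (Nat.lt_succ_iff.mp h)
    · have hd : G.dist o x = n + 1 := le_antisymm hx h
      obtain ⟨p, hp⟩ := (hconn x o).exists_walk_length_eq_dist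
      rw [SimpleGraph.dist_comm] at hd
      rw [hd] at hp
      cases p with
      | nil => simp at hp
      | @cons _ y _ hadj q =>
        right
        refine Set.mem_biUnion (x := y) ?_ hadj.symm
        have hq : q.length = n := by simpa using hp
        have h1 : G.dist y o ≤ q.length := SimpleGraph.dist_le q
        simp only [Set.mem_setOf_eq]
        rw [SimpleGraph.dist_comm]
        omega

lemma aux_count {V : Type*} (G : SimpleGraph V) (D : ℕ)
    (hdeg : ∀ v : V, (G.neighborSet v).Finite ∧ (G.neighborSet v).ncard ≤ D)
    (o : V) (n : ℕ) (hball : {x : V | G.dist o x ≤ n + 1}.Finite) :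
    {p : V × V | G.Adj p.1 p.2 ∧ G.dist o p.1 = n ∧ G.dist o p.2 = n + 1}.ncard ≤
      D * {x : V | G.dist o x = n + 1}.ncard := by
  classical
  have hsph : {x : V | G.dist o x = n + 1}.Finite :=
    hball.subset (fun x hx => le_of_eq hx)
  have hE : {p : V × V | G.Adj p.1 p.2 ∧ G.dist o p.1 = n ∧ G.dist o p.2 = n + 1}.Finite := by
    refine (hball.prod hball).subset ?_
    rintro ⟨x, y⟩ ⟨-, h1, h2⟩
    exact ⟨by simp only [Set.mem_setOf_eq, h1]; omega, by simp [h2]⟩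
  rw [Set.ncard_eq_toFinset_card _ hE, Set.ncard_eq_toFinset_card _ hsph]
  refine Finset.card_le_mul_card_image_of_maps_to (f := Prod.snd) ?_ D ?_
  · rintro ⟨x, y⟩ hp
    simp only [Set.Finite.mem_toFinset, Set.mem_setOf_eq] at hp
    simpa using hp.2.2
  · intro y hy
    have hcard : (G.neighborSet y).ncard = (hdeg y).1.toFinset.card :=
      Set.ncard_eq_toFinset_card _ (hdeg y).1
    calc (hE.toFinset.filter (fun a => a.2 = y)).card ≤ (hdeg y).1.toFinset.card := by
          refine Finset.card_le_card_of_injOn Prod.fst ?_ ?_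
          · rintro ⟨x, y'⟩ hp
            change (x, y') ∈ hE.toFinset.filter (fun a => a.2 = y) at hp
            simp only [Finset.mem_coe, Finset.mem_filter, Set.Finite.mem_toFinset, Set.mem_setOf_eq] at hp ⊢
            obtain ⟨⟨hadj, -, -⟩, rfl⟩ := hp
            exact hadj.symm
          · rintro ⟨x, y1⟩ hp1 ⟨x2, y2⟩ hp2 h
            simp only [Finset.coe_filter, Set.Finite.mem_toFinset, Set.mem_setOf_eq] at hp1 hp2
            simp only at h
            simp [h, hp1.2, hp2.2]
      _ ≤ D := hcard ▸ (hdeg y).2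

lemma aux_liminf_eq_zero (f : ℕ → ℝ) (h0 : ∀ n, 0 ≤ f n)
    (hfreq : ∀ ε > (0:ℝ), ∃ᶠ n in atTop, f n < ε) :
    Filter.liminf f Filter.atTop = 0 := by
  rw [Filter.liminf_eq]
  have h0mem : (0:ℝ) ∈ {a | ∀ᶠ n in atTop, a ≤ f n} :=
    Filter.Eventually.of_forall h0
  have hub : ∀ a ∈ {a | ∀ᶠ n in atTop, a ≤ f n}, a ≤ 0 := by
    intro a ha
    by_contra hlt
    push_neg at hlt
    obtain ⟨n, h1, h2⟩ := (ha.and_frequently (hfreq a hlt)).exists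
    linarith
  exact le_antisymm (csSup_le ⟨0, h0mem⟩ hub) (le_csSup ⟨0, hub⟩ h0mem)

lemma aux_not_ev (f : ℕ → ℝ) (h : Filter.liminf f Filter.atTop = 1)
    (c : ℝ) (hc : 1 < c) (hev : ∀ᶠ n in atTop, c ≤ f n) : False := by
  rw [Filter.liminf_eq] at h
  by_cases hbdd : BddAbove {a | ∀ᶠ n in atTop, a ≤ f n}
  · have := le_csSup hbdd hev
    rw [h] at this
    linarith
  · rw [Real.sSup_of_not_bddAbove hbdd] at h
    norm_num at h

/-- If a connected bounded-degree graph has subexponential growth of balls from `o`,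
then the relative number of edges between sphere `n` and sphere `n+1` has liminf `0`
(condition (1.5) of the paper is weaker than subexponential growth (1.4)). -/
theorem boundary_edges_liminf_zero_of_subexponential_growth
    {V : Type*} (G : SimpleGraph V) (hconn : G.Connected)
    (D : ℕ) (hdeg : ∀ v : V, (G.neighborSet v).Finite ∧ (G.neighborSet v).ncard ≤ D)
    (o : V)
    (hsub : Filter.liminf
        (fun n : ℕ => (({x : V | G.dist o x ≤ n}.ncard : ℝ)) ^ ((n : ℝ)⁻¹))
        Filter.atTop = 1) :
    Filter.liminf
      (fun n : ℕ =>
        ({p : V × V | G.Adj p.1 p.2 ∧ G.dist o p.1 = n ∧ G.dist o p.2 = n + 1}.ncard : ℝ) /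
          ({x : V | G.dist o x ≤ n}.ncard : ℝ))
      Filter.atTop = 0 := by
  classical
  have hfin : ∀ n : ℕ, {x : V | G.dist o x ≤ n}.Finite :=
    aux_ball_finite G hconn (fun v => (hdeg v).1) o
  set b : ℕ → ℝ := fun n => ({x : V | G.dist o x ≤ n}.ncard : ℝ) with hbdef
  set E : ℕ → ℝ := fun n =>
    ({p : V × V | G.Adj p.1 p.2 ∧ G.dist o p.1 = n ∧ G.dist o p.2 = n + 1}.ncard : ℝ) with hEdef
  have hb1 : ∀ n, 1 ≤ b n := by
    intro n
    have h : 0 < {x : V | G.dist o x ≤ n}.ncard :=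
      (Set.ncard_pos (hfin n)).mpr ⟨o, by simp [SimpleGraph.dist_self]⟩
    show (1:ℝ) ≤ ({x : V | G.dist o x ≤ n}.ncard : ℝ)
    exact_mod_cast h
  have hbpos : ∀ n, 0 < b n := fun n => lt_of_lt_of_le one_pos (hb1 n)
  have hEnonneg : ∀ n, 0 ≤ E n := fun n => by
    show (0:ℝ) ≤ _
    positivity
  -- bound : E n ≤ D * (b (n+1) - b n)
  have hEle : ∀ n : ℕ, E n ≤ D * (b (n + 1) - b n) := by
    intro n
    have hmono : {x : V | G.dist o x ≤ n}.ncard ≤ {x : V | G.dist o x ≤ n + 1}.ncard :=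
      Set.ncard_le_ncard (fun x hx => le_trans hx (Nat.le_succ n)) (hfin (n + 1))
    have hsphere : {x : V | G.dist o x = n + 1} =
        {x : V | G.dist o x ≤ n + 1} \ {x : V | G.dist o x ≤ n} := by
      ext x
      simp only [Set.mem_setOf_eq, Set.mem_diff]
      omega
    have hsub' : {x : V | G.dist o x ≤ n} ⊆ {x : V | G.dist o x ≤ n + 1} :=
      fun x hx => le_trans hx (Nat.le_succ n)
    have hcount := aux_count G D hdeg o n (hfin (n + 1))
    rw [hsphere, Set.ncard_diff hsub' (hfin n)] at hcount
    show (({p : V × V | G.Adj p.1 p.2 ∧ G.dist o p.1 = n ∧ G.dist o p.2 = n + 1}.ncard : ℝ)) ≤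
        (D : ℝ) * (({x : V | G.dist o x ≤ n + 1}.ncard : ℝ) - ({x : V | G.dist o x ≤ n}.ncard : ℝ))
    rw [← Nat.cast_sub hmono, ← Nat.cast_mul]
    exact_mod_cast hcount
  -- main frequent claim
  have key : ∀ ε > (0:ℝ), ∃ᶠ n in atTop, E n / b n < ε := by
    intro ε hε
    by_contra hcon
    rw [Filter.not_frequently] at hcon
    simp only [not_lt] at hcon
    obtain ⟨N, hN⟩ := Filter.eventually_atTop.mp hcon
    rcases Nat.eq_zero_or_pos D with hD0 | hDpos
    · -- D = 0 : no edges at all, E N = 0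
      have hE0 : E N = 0 := by
        have hempty : {p : V × V | G.Adj p.1 p.2 ∧ G.dist o p.1 = N ∧ G.dist o p.2 = N + 1} = ∅ := by
          ext p
          simp only [Set.mem_setOf_eq, Set.mem_empty_iff_false, iff_false]
          rintro ⟨hadj, -, -⟩
          have h1 := (hdeg p.1).2
          rw [hD0, Nat.le_zero, Set.ncard_eq_zero (hdeg p.1).1] at h1
          exact Set.notMem_empty p.2 (h1 ▸ hadj)
        show (({p : V × V | G.Adj p.1 p.2 ∧ G.dist o p.1 = N ∧ G.dist o p.2 = N + 1}.ncard : ℝ)) = 0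
        rw [hempty]
        simp
      have := hN N le_rfl
      rw [hE0, zero_div] at this
      linarith
    have hD : (0:ℝ) < D := by exact_mod_cast hDpos
    set δ : ℝ := ε / D with hδdef
    have hδpos : 0 < δ := div_pos hε hD
    -- growth step
    have hstep : ∀ n ≥ N, (1 + δ) * b n ≤ b (n + 1) := by
      intro n hn
      have h1 : ε ≤ E n / b n := hN n hn
      have h3 : ε * b n ≤ E n := (le_div_iff₀ (hbpos n)).mp h1
      have h4 : ε * b n ≤ D * (b (n + 1) - b n) := h3.trans (hEle n)
      have h5 : δ * b n ≤ b (n + 1) - b n := by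
        rw [hδdef, div_mul_eq_mul_div, div_le_iff₀ hD]
        nlinarith
      linarith
    -- exponential growth
    have hgrow : ∀ n, N ≤ n → (1 + δ) ^ (n - N) ≤ b n := by
      intro n hn
      induction n, hn using Nat.le_induction with
      | base => simpa using hb1 N
      | succ n hn ih =>
        have heq : n + 1 - N = (n - N) + 1 := by omega
        rw [heq, pow_succ]
        have h5 := hstep n hn
        nlinarith [hbpos n, pow_pos (by linarith : (0:ℝ) < 1 + δ) (n - N)]
    -- contradiction with subexponential growth
    set c : ℝ := 1 + δ / 2 with hcdef
    have hc1 : 1 < c := by rw [hcdef]; linarith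
    have hcpos : (0:ℝ) < c := by linarith
    have hcδ : c < 1 + δ := by rw [hcdef]; linarith
    refine aux_not_ev _ hsub c hc1 ?_
    have hratio : 1 < (1 + δ) / c := (one_lt_div hcpos).mpr hcδ
    have htend := tendsto_pow_atTop_atTop_of_one_lt hratio
    filter_upwards [htend.eventually_ge_atTop ((1 + δ) ^ N), Filter.eventually_ge_atTop (max N 1)]
      with n h1 h2
    have hnN : N ≤ n := le_trans (le_max_left _ _) h2
    have hn1 : 1 ≤ n := le_trans (le_max_right _ _) h2
    have hδ1pos : (0:ℝ) < 1 + δ := by linarith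
    have hcpow : c ^ n ≤ (1 + δ) ^ (n - N) := by
      rw [div_pow] at h1
      have h6 : (1 + δ) ^ N * c ^ n ≤ (1 + δ) ^ n :=
        (le_div_iff₀ (pow_pos hcpos n)).mp h1
      have h7 : (1 + δ) ^ (n - N) * (1 + δ) ^ N = (1 + δ) ^ n := by
        rw [← pow_add]
        congr 1
        omega
      refine le_of_mul_le_mul_right ?_ (pow_pos hδ1pos N)
      rw [h7]
      linarith
    have hbn : c ^ n ≤ b n := le_trans hcpow (hgrow n hnN)
    have hnne : ((n:ℝ)) ≠ 0 := Nat.cast_ne_zero.mpr (by omega)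
    calc c = (c ^ n) ^ ((n:ℝ)⁻¹) := by
          rw [← Real.rpow_natCast c n, ← Real.rpow_mul hcpos.le,
            mul_inv_cancel₀ hnne, Real.rpow_one]
      _ ≤ b n ^ ((n:ℝ)⁻¹) :=
          Real.rpow_le_rpow (by positivity) hbn (by positivity)
  -- conclude
  exact aux_liminf_eq_zero _ (fun n => div_nonneg (hEnonneg n) (hbpos n).le) key
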